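/- For all n ≥ 1, the type B positive Eulerian polynomial B_n^+(t) = ∑_{w ∈ B_n, sgn_B(w)=1} t^{des_B(w)} satisfies B_n^+(t)/(1-t)^{n+1} = ∑_{k ≥ 0} (((2k+1)^n + 1)/2) t^k as formal power series. -/

import Mathlib

open scoped Classical

/-- An element of the hyperoctahedral group `B_n`, encoded as an underlying
permutation `u ∈ S_n` together with the set of negated positions (`true` = negated). -/
abbrev BPerm (n : ℕ) := Equiv.Perm (Fin n) × (Fin n → Bool)

/-- The one-line value `w(i)` (as an integer, positions and values `1,…,n`)
of the signed permutation, with the convention `w(0) = 0`. -/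
noncomputable def bval {n : ℕ} (p : BPerm n) (i : ℕ) : ℤ :=
  if h : 1 ≤ i ∧ i ≤ n then
    (if p.2 ⟨i - 1, by omega⟩ then -(((p.1 ⟨i - 1, by omega⟩ : Fin n) : ℕ) + 1 : ℤ)
      else (((p.1 ⟨i - 1, by omega⟩ : Fin n) : ℕ) + 1 : ℤ))
  else 0

/-- The number of type B descents: `0 ≤ i ≤ n-1` with `w(i) > w(i+1)`, where `w(0)=0`. -/
noncomputable def desB {n : ℕ} (p : BPerm n) : ℕ :=
  ((Finset.range n).filter (fun i => bval p (i + 1) < bval p i)).card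

/-- The sign character of `B_n`: `sgn_B(u^J) = (-1)^{|J|} sgn(u)`. -/
noncomputable def sgnB {n : ℕ} (p : BPerm n) : ℤ :=
  (Equiv.Perm.sign p.1 : ℤ) * (-1) ^ ((Finset.univ.filter (fun i => p.2 i = true)).card)

namespace TypeBAux

open Finset

variable {n : ℕ}

/-- sign-adjusted value sequence of `f` along positions of `p` (1-based, `0` at `0`). -/
noncomputable def gval (p : BPerm n) (f : Fin n → ℤ) (i : ℕ) : ℤ :=
  if h : 1 ≤ i ∧ i ≤ n then
    (if p.2 ⟨i - 1, by omega⟩ then -f (p.1 ⟨i - 1, by omega⟩) else f (p.1 ⟨i - 1, by omega⟩))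
  else 0

/-- `f` lies in the (closed/open as appropriate) chamber of `p`. -/
def Compat (p : BPerm n) (f : Fin n → ℤ) : Prop :=
  ∀ i < n, gval p f i ≤ gval p f (i + 1) ∧
    (bval p (i + 1) < bval p i → gval p f i < gval p f (i + 1))

/-- tie-breaking secondary key. -/
def sval (f : Fin n → ℤ) (v : Fin n) : ℤ :=
  if f v < 0 then -((v : ℤ) + 1) else (v : ℤ) + 1

/-- the sorting key. -/
def skey (f : Fin n → ℤ) (v : Fin n) : ℤ :=
  (2 * n + 1) * |f v| + sval f v

/-- the canonical form characterization. -/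
def R (p : BPerm n) (f : Fin n → ℤ) : Prop :=
  (∀ j : Fin n, p.2 j = true ↔ f (p.1 j) < 0) ∧
    StrictMono (fun j : Fin n => skey f (p.1 j))

lemma bval_zero (p : BPerm n) : bval p 0 = 0 := by simp [bval]

lemma bval_succ (p : BPerm n) (i : ℕ) (hi : i < n) :
    bval p (i + 1) = (if p.2 ⟨i, hi⟩ then -(((p.1 ⟨i, hi⟩ : Fin n) : ℕ) + 1 : ℤ)
      else (((p.1 ⟨i, hi⟩ : Fin n) : ℕ) + 1 : ℤ)) := by
  rw [bval, dif_pos ⟨by omega, by omega⟩]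
  simp only [Nat.add_sub_cancel]

lemma gval_zero (p : BPerm n) (f : Fin n → ℤ) : gval p f 0 = 0 := by simp [gval]

lemma gval_succ (p : BPerm n) (f : Fin n → ℤ) (i : ℕ) (hi : i < n) :
    gval p f (i + 1) =
      (if p.2 ⟨i, hi⟩ then -f (p.1 ⟨i, hi⟩) else f (p.1 ⟨i, hi⟩)) := by
  rw [gval, dif_pos ⟨by omega, by omega⟩]
  simp only [Nat.add_sub_cancel]

lemma sval_bound (f : Fin n → ℤ) (v : Fin n) : 1 ≤ |sval f v| ∧ |sval f v| ≤ n := by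
  have hv : (v : ℕ) < n := v.2
  have hv' : ((v : ℕ) : ℤ) < n := by exact_mod_cast hv
  rw [sval]
  split
  · rw [abs_neg, abs_of_nonneg (by positivity)]
    omega
  · rw [abs_of_nonneg (by positivity)]
    omega

lemma skey_lt_iff (f : Fin n → ℤ) (v w : Fin n) :
    skey f v < skey f w ↔
      |f v| < |f w| ∨ (|f v| = |f w| ∧ sval f v < sval f w) := by
  have h1 := (sval_bound f v).2
  have h2 := (sval_bound f w).2
  have h1' : sval f v ≤ |sval f v| := le_abs_self _
  have h2' : sval f w ≤ |sval f w| := le_abs_self _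
  have h1'' : -|sval f v| ≤ sval f v := neg_abs_le _
  have h2'' : -|sval f w| ≤ sval f w := neg_abs_le _
  constructor
  · intro h
    rcases lt_trichotomy (|f v|) (|f w|) with hc | hc | hc
    · exact Or.inl hc
    · refine Or.inr ⟨hc, ?_⟩
      rw [skey, skey, hc] at h
      omega
    · exfalso
      have hm : (2 * (n : ℤ) + 1) * (|f w| + 1) ≤ (2 * (n : ℤ) + 1) * |f v| := by
        apply mul_le_mul_of_nonneg_left (by omega) (by positivity)
      rw [skey, skey] at h
      rw [mul_add, mul_one] at hm
      linarith
  · rintro (h | ⟨hEq, hlt⟩)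
    · have hm : (2 * (n : ℤ) + 1) * (|f v| + 1) ≤ (2 * (n : ℤ) + 1) * |f w| := by
        apply mul_le_mul_of_nonneg_left (by omega) (by positivity)
      rw [skey, skey]
      rw [mul_add, mul_one] at hm
      linarith
    · rw [skey, skey, hEq]
      omega

lemma sval_injective (f : Fin n → ℤ) : Function.Injective (sval f) := by
  intro v w h
  rw [sval, sval] at h
  have hv : (v : ℕ) < n := v.2
  have hw : (w : ℕ) < n := w.2
  split at h <;> split at h <;> · exact Fin.ext (by omega)

lemma skey_injective (f : Fin n → ℤ) : Function.Injective (skey f) := by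
  intro v w h
  have h1 : ¬ (|f w| < |f v| ∨ (|f w| = |f v| ∧ sval f w < sval f v)) := by
    rw [← skey_lt_iff]; omega
  have h2 : ¬ (|f v| < |f w| ∨ (|f v| = |f w| ∧ sval f v < sval f w)) := by
    rw [← skey_lt_iff]; omega
  push_neg at h1 h2
  have habs : |f v| = |f w| := le_antisymm h1.1 h2.1
  exact sval_injective f (le_antisymm (h1.2 habs.symm) (h2.2 habs))

lemma strictMono_fin_of_adj {α : Type*} [Preorder α] {g : Fin n → α}
    (h : ∀ i, (hi : i + 1 < n) → g ⟨i, by omega⟩ < g ⟨i + 1, hi⟩) : StrictMono g := by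
  rintro ⟨a, ha⟩ ⟨b, hb⟩ hab
  have hab' : a < b := hab
  have key : ∀ b, ∀ (hb : b < n), a < b → g ⟨a, ha⟩ < g ⟨b, hb⟩ := by
    intro b
    induction b with
    | zero => omega
    | succ b ih =>
      intro hb hab
      rcases Nat.lt_or_ge a b with h' | h'
      · exact lt_trans (ih (by omega) h') (h b hb)
      · have hx : a = b := by omega
        subst hx
        exact h a hb
  exact key b hb hab'

/-- the canonical signed permutation attached to `f`. -/
noncomputable def chamber (f : Fin n → ℤ) : BPerm n :=
  (Tuple.sort (skey f), fun j => decide (f (Tuple.sort (skey f) j) < 0))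

lemma R_chamber (f : Fin n → ℤ) : R (chamber f) f := by
  constructor
  · intro j
    simp [chamber]
  · have hmono : Monotone (skey f ∘ Tuple.sort (skey f)) := Tuple.monotone_sort _
    have hinj : Function.Injective (skey f ∘ Tuple.sort (skey f)) :=
      (skey_injective f).comp (Equiv.injective _)
    exact hmono.strictMono_of_injective hinj

lemma R_unique {p q : BPerm n} {f : Fin n → ℤ} (hp : R p f) (hq : R q f) : p = q := by
  have hcard : (image (skey f) univ).card = n := by
    rw [card_image_of_injective _ (skey_injective f), card_univ, Fintype.card_fin]
  have e1 : (fun j => skey f (p.1 j)) = (image (skey f) univ).orderEmbOfFin hcard :=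
    orderEmbOfFin_unique hcard (fun x => mem_image_of_mem _ (mem_univ _)) hp.2
  have e2 : (fun j => skey f (q.1 j)) = (image (skey f) univ).orderEmbOfFin hcard :=
    orderEmbOfFin_unique hcard (fun x => mem_image_of_mem _ (mem_univ _)) hq.2
  have h1 : p.1 = q.1 := by
    apply Equiv.ext
    intro j
    exact skey_injective f (by rw [← e2] at e1; exact congrFun e1 j)
  have h2 : p.2 = q.2 := by
    funext j
    have := (hp.1 j).trans ((h1 ▸ hq.1 j)).symm
    cases hx : p.2 j <;> cases hy : q.2 j <;> simp_all
  exact Prod.ext h1 h2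

lemma gval_abs {p : BPerm n} {f : Fin n → ℤ} (j : ℕ) (hj : j < n)
    (hs : p.2 ⟨j, hj⟩ = true ↔ f (p.1 ⟨j, hj⟩) < 0) :
    gval p f (j + 1) = |f (p.1 ⟨j, hj⟩)| := by
  rw [gval_succ _ _ _ hj]
  split
  · rw [abs_of_neg (hs.1 (by assumption))]
  · rw [abs_of_nonneg]
    by_contra hneg
    simp_all

lemma sval_eq_bval {p : BPerm n} {f : Fin n → ℤ} (j : ℕ) (hj : j < n)
    (hs : p.2 ⟨j, hj⟩ = true ↔ f (p.1 ⟨j, hj⟩) < 0) :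
    sval f (p.1 ⟨j, hj⟩) = bval p (j + 1) := by
  rw [bval_succ _ _ hj, sval]
  split
  · rw [if_pos (hs.2 (by assumption))]
  · rw [if_neg]
    simp only [Bool.not_eq_true]
    by_contra hx
    simp only [Bool.not_eq_false] at hx
    exact ‹¬ f (p.1 ⟨j, hj⟩) < 0› (hs.1 hx)

lemma bval_pos_of_false {p : BPerm n} (j : ℕ) (hj : j < n) (h : p.2 ⟨j, hj⟩ = false) :
    0 < bval p (j + 1) := by
  rw [bval_succ _ _ hj, h]
  simp only [if_neg Bool.false_ne_true]
  positivity

lemma bval_neg_of_true {p : BPerm n} (j : ℕ) (hj : j < n) (h : p.2 ⟨j, hj⟩ = true) :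
    bval p (j + 1) < 0 := by
  rw [bval_succ _ _ hj, h]
  have : (0:ℤ) ≤ ((p.1 ⟨j, hj⟩ : Fin n) : ℕ) := Int.natCast_nonneg _
  simp only [if_true]
  omega

lemma bval_succ_ne {p : BPerm n} (i j : ℕ) (hi : i < n) (hj : j < n) (hij : i ≠ j) :
    bval p (i + 1) ≠ bval p (j + 1) := by
  rw [bval_succ _ _ hi, bval_succ _ _ hj]
  have hne : p.1 ⟨i, hi⟩ ≠ p.1 ⟨j, hj⟩ := by
    intro hx
    have := p.1.injective hx
    simp only [Fin.mk.injEq] at this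
    exact hij this
  have hne' : ((p.1 ⟨i, hi⟩ : Fin n) : ℕ) ≠ ((p.1 ⟨j, hj⟩ : Fin n) : ℕ) :=
    fun hx => hne (Fin.ext hx)
  split <;> split <;> omega

lemma compat_of_R {p : BPerm n} {f : Fin n → ℤ} (h : R p f) : Compat p f := by
  obtain ⟨hs, hm⟩ := h
  intro i hi
  match i with
  | 0 =>
    rw [gval_zero, bval_zero, gval_abs 0 hi (hs _)]
    refine ⟨abs_nonneg _, fun hdesc => ?_⟩
    have h0 : p.2 ⟨0, hi⟩ = true := by
      by_contra hx
      simp only [Bool.not_eq_true] at hx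
      exact absurd hdesc (by have := bval_pos_of_false 0 hi hx; omega)
    have := (hs ⟨0, hi⟩).1 h0
    simp only [abs_pos]
    omega
  | (i + 1) =>
    have hi' : i < n := by omega
    have hkey : skey f (p.1 ⟨i, hi'⟩) < skey f (p.1 ⟨i + 1, hi⟩) := by
      exact hm (show (⟨i, hi'⟩ : Fin n) < ⟨i + 1, hi⟩ by simp [Fin.lt_def])
    rw [skey_lt_iff] at hkey
    rw [gval_abs i hi' (hs _), gval_abs (i+1) hi (hs _)]
    constructor
    · rcases hkey with h | ⟨hEq, _⟩
      · exact h.le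
      · exact hEq.le
    · intro hdesc
      rcases hkey with h | ⟨hEq, hsv⟩
      · exact h
      · exfalso
        rw [sval_eq_bval i hi' (hs _), sval_eq_bval (i+1) hi (hs _)] at hsv
        omega

lemma gval_nonneg {p : BPerm n} {f : Fin n → ℤ} (h : Compat p f) :
    ∀ i, i ≤ n → 0 ≤ gval p f i := by
  intro i
  induction i with
  | zero => simp [gval_zero]
  | succ i ih => exact fun hi => le_trans (ih (by omega)) ((h i (by omega)).1)

lemma gval_pos_of_neg {p : BPerm n} {f : Fin n → ℤ} (h : Compat p f) :
    ∀ j, ∀ (hj : j < n), p.2 ⟨j, hj⟩ = true → 0 < gval p f (j + 1) := by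
  intro j
  induction j with
  | zero =>
    intro hj htrue
    have hdesc : bval p (0 + 1) < bval p 0 := by
      rw [bval_zero]; exact bval_neg_of_true 0 hj htrue
    have := (h 0 hj).2 hdesc
    rw [gval_zero] at this
    exact this
  | succ j ih =>
    intro hj htrue
    have hj0 : j < n := by omega
    by_cases hprev : p.2 ⟨j, hj0⟩ = true
    · exact lt_of_lt_of_le (ih hj0 hprev) (h (j + 1) hj).1
    · have hdesc : bval p (j + 1 + 1) < bval p (j + 1) := by
        have h1 := bval_pos_of_false j hj0 (by simpa using hprev)
        have h2 := bval_neg_of_true (j + 1) hj htrue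
        omega
      exact lt_of_le_of_lt (gval_nonneg h (j + 1) (by omega)) ((h (j + 1) hj).2 hdesc)

lemma sign_of_compat {p : BPerm n} {f : Fin n → ℤ} (h : Compat p f) (j : Fin n) :
    p.2 j = true ↔ f (p.1 j) < 0 := by
  have hj : (j : ℕ) < n := j.2
  have hj' : (⟨(j : ℕ), hj⟩ : Fin n) = j := Fin.ext rfl
  constructor
  · intro ht
    have hpos := gval_pos_of_neg h j hj (by rw [hj']; exact ht)
    rw [gval_succ _ _ _ hj, if_pos (by rw [hj']; exact ht), hj'] at hpos
    omega
  · intro hf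
    by_contra hft
    simp only [Bool.not_eq_true] at hft
    have := gval_nonneg h ((j : ℕ) + 1) (by omega)
    rw [gval_succ _ _ _ hj, if_neg (by rw [hj']; simp [hft]), hj'] at this
    omega

lemma R_of_compat {p : BPerm n} {f : Fin n → ℤ} (h : Compat p f) : R p f := by
  refine ⟨sign_of_compat h, strictMono_fin_of_adj ?_⟩
  intro i hi
  have hi' : i < n := by omega
  rw [skey_lt_iff]
  have hle := (h (i + 1) hi).1
  rw [gval_abs i hi' (sign_of_compat h _), gval_abs (i + 1) hi (sign_of_compat h _)] at hle
  rcases lt_or_eq_of_le hle with hlt | hEq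
  · exact Or.inl hlt
  · refine Or.inr ⟨hEq, ?_⟩
    rw [sval_eq_bval i hi' (sign_of_compat h _), sval_eq_bval (i + 1) hi (sign_of_compat h _)]
    have hne := bval_succ_ne (p := p) i (i + 1) hi' hi (by omega)
    rcases lt_trichotomy (bval p (i + 1)) (bval p (i + 1 + 1)) with hx | hx | hx
    · exact hx
    · exact absurd hx hne
    · exfalso
      have := (h (i + 1) hi).2 hx
      rw [gval_abs i hi' (sign_of_compat h _), gval_abs (i + 1) hi (sign_of_compat h _)] at this
      omega

lemma compat_iff_R {p : BPerm n} {f : Fin n → ℤ} : Compat p f ↔ R p f :=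
  ⟨R_of_compat, compat_of_R⟩

lemma compat_chamber (f : Fin n → ℤ) : Compat (chamber f) f := compat_of_R (R_chamber f)

lemma chamber_eq_iff {p : BPerm n} {f : Fin n → ℤ} : chamber f = p ↔ Compat p f := by
  constructor
  · rintro rfl; exact compat_chamber f
  · intro h; exact R_unique (R_chamber f) (R_of_compat h)

section Counting

lemma chain_le {g : ℕ → ℤ} {m : ℕ} (hadj : ∀ i < m, g i ≤ g (i + 1)) :
    ∀ {i j}, i ≤ j → j ≤ m → g i ≤ g j := by
  intro i j hij hjm
  induction j with
  | zero => rw [Nat.le_zero.mp hij]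
  | succ j ih =>
    rcases Nat.eq_or_lt_of_le hij with h | h
    · rw [h]
    · exact le_trans (ih (by omega) (by omega)) (hadj j (by omega))

lemma chain_lt {g : ℕ → ℤ} {m : ℕ} (hadj : ∀ i < m, g i < g (i + 1)) :
    ∀ {i j}, i < j → j ≤ m → g i < g j := by
  intro i j hij hjm
  induction j with
  | zero => omega
  | succ j ih =>
    rcases Nat.eq_or_lt_of_le hij with h | h
    · rw [← h]
      exact hadj i (by omega)
    · exact lt_trans (ih (by omega) (by omega)) (hadj j (by omega))

/-- number of descents among positions `< i`. -/
noncomputable def DD (p : BPerm n) (i : ℕ) : ℕ :=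
  ((range i).filter (fun t => bval p (t + 1) < bval p t)).card

lemma DD_zero (p : BPerm n) : DD p 0 = 0 := by simp [DD]

lemma DD_succ (p : BPerm n) (i : ℕ) :
    DD p (i + 1) = DD p i + (if bval p (i + 1) < bval p i then 1 else 0) := by
  rw [DD, DD, range_add_one, filter_insert]
  split
  · rw [card_insert_of_notMem (by simp)]
  · simp

lemma DD_n (p : BPerm n) : DD p n = desB p := rfl

lemma DD_le (p : BPerm n) (i : ℕ) : DD p i ≤ i :=
  le_trans (card_filter_le _ _) (by simp)

lemma desB_le (p : BPerm n) : desB p ≤ n := DD_n p ▸ DD_le p n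

lemma DD_add_le (p : BPerm n) (i j : ℕ) : DD p (i + j) ≤ DD p i + j := by
  induction j with
  | zero => simp
  | succ j ih =>
    rw [← Nat.add_assoc, DD_succ]
    split <;> omega

lemma desB_le_DD (p : BPerm n) (i : ℕ) (hi : i ≤ n) : desB p ≤ DD p i + (n - i) := by
  have := DD_add_le p i (n - i)
  rw [show i + (n - i) = n by omega, DD_n] at this
  exact this

/-- the shifted (strictly increasing) sequence. -/
noncomputable def Tv (p : BPerm n) (f : Fin n → ℤ) (i : ℕ) : ℤ :=
  gval p f i + i - DD p i

lemma DD_le_gval {p : BPerm n} {f : Fin n → ℤ} (h : Compat p f) :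
    ∀ i ≤ n, (DD p i : ℤ) ≤ gval p f i := by
  intro i
  induction i with
  | zero => simp [DD_zero, gval_zero]
  | succ i ih =>
    intro hi
    have h1 := ih (by omega)
    have h2 := (h i (by omega)).1
    have h3 := (h i (by omega)).2
    rw [DD_succ]
    split
    · have := h3 (by assumption)
      push_cast
      omega
    · push_cast
      omega

lemma Tv_adj {p : BPerm n} {f : Fin n → ℤ} (h : Compat p f) :
    ∀ i < n, Tv p f i < Tv p f (i + 1) := by
  intro i hi
  have h1 := (h i hi).1
  have h2 := (h i hi).2
  rw [Tv, Tv, DD_succ]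
  split
  · have := h2 (by assumption)
    push_cast
    omega
  · push_cast
    omega

lemma gval_eq_n {p : BPerm n} {f : Fin n → ℤ} (h : Compat p f) (hn : 0 < n)
    (hb : ∀ v, |f v| ≤ (k : ℤ)) : gval p f n ≤ k := by
  have heq := gval_abs (p := p) (f := f) (n - 1) (by omega) (sign_of_compat h _)
  rw [show n - 1 + 1 = n by omega] at heq
  rw [heq]
  exact hb _

variable {k : ℕ}

lemma Tv_bounds {p : BPerm n} {f : Fin n → ℤ} (h : Compat p f) (hn : 0 < n)
    (hb : ∀ v, |f v| ≤ (k : ℤ)) (i : ℕ) (hi1 : 1 ≤ i) (hin : i ≤ n) :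
    1 ≤ Tv p f i ∧ Tv p f i ≤ (n : ℤ) + k - desB p := by
  constructor
  · have h1 := DD_le_gval h i hin
    rw [Tv]
    omega
  · have hmono : Tv p f i ≤ Tv p f n :=
      chain_le (fun t ht => (Tv_adj h t ht).le) hin (le_refl n)
    have hend : Tv p f n = gval p f n + n - desB p := by rw [Tv, DD_n]
    have := gval_eq_n h hn hb
    omega

/-- the backward map : reconstruct `f` from the finset `s`. -/
noncomputable def backF (p : BPerm n) (s : Finset ℤ) (hcard : s.card = n) : Fin n → ℤ :=
  fun v =>
    let j := p.1.symm v
    let G := s.orderEmbOfFin hcard j - ((j : ℕ) + 1) + DD p ((j : ℕ) + 1)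
    if p.2 j then -G else G

lemma gval_backF (p : BPerm n) (s : Finset ℤ) (hcard : s.card = n)
    (j : ℕ) (hj : j < n) :
    gval p (backF p s hcard) (j + 1) =
      s.orderEmbOfFin hcard ⟨j, hj⟩ - (j + 1) + DD p (j + 1) := by
  rw [gval_succ _ _ _ hj]
  have hsymm : p.1.symm (p.1 ⟨j, hj⟩) = ⟨j, hj⟩ := p.1.symm_apply_apply _
  rw [backF]
  simp only [hsymm]
  split <;> simp

lemma compat_backF (p : BPerm n) {s : Finset ℤ} (hcard : s.card = n)
    (hsub : s ⊆ Icc (1 : ℤ) ((n : ℤ) + k - desB p)) : Compat p (backF p s hcard) := by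
  have hE : ∀ j : Fin n, 1 ≤ s.orderEmbOfFin hcard j ∧
      s.orderEmbOfFin hcard j ≤ (n : ℤ) + k - desB p := by
    intro j
    have := hsub (s.orderEmbOfFin_mem hcard j)
    rwa [mem_Icc] at this
  intro i hi
  match i with
  | 0 =>
    rw [gval_zero, gval_backF p s hcard 0 hi, DD_succ, DD_zero]
    have h0 := hE ⟨0, hi⟩
    by_cases hd : bval p (0 + 1) < bval p 0
    · rw [if_pos hd]
      push_cast
      refine ⟨by omega, fun _ => by omega⟩
    · rw [if_neg hd]
      push_cast
      refine ⟨by omega, fun hx => absurd hx hd⟩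
  | (i + 1) =>
    have hi' : i < n := by omega
    rw [gval_backF p s hcard i hi', gval_backF p s hcard (i + 1) hi,
      DD_succ p (i + 1)]
    have hlt : s.orderEmbOfFin hcard ⟨i, hi'⟩ < s.orderEmbOfFin hcard ⟨i + 1, hi⟩ :=
      (s.orderEmbOfFin hcard).strictMono (by simp [Fin.lt_def])
    by_cases hd : bval p (i + 1 + 1) < bval p (i + 1)
    · rw [if_pos hd]
      push_cast
      refine ⟨by omega, fun _ => by omega⟩
    · rw [if_neg hd]
      push_cast
      refine ⟨by omega, fun hx => absurd hx hd⟩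

lemma backF_abs_le (p : BPerm n) (hn : 0 < n) {s : Finset ℤ} (hcard : s.card = n)
    (hsub : s ⊆ Icc (1 : ℤ) ((n : ℤ) + k - desB p)) :
    ∀ v, |backF p s hcard v| ≤ (k : ℤ) := by
  have hc := compat_backF (k := k) p hcard hsub
  intro v
  have hjn : ((p.1.symm v : Fin n) : ℕ) < n := (p.1.symm v).2
  have heta : (⟨((p.1.symm v : Fin n) : ℕ), hjn⟩ : Fin n) = p.1.symm v := Fin.ext rfl
  have habs : gval p (backF p s hcard) (((p.1.symm v : Fin n) : ℕ) + 1)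
      = |backF p s hcard v| := by
    rw [gval_abs _ hjn (sign_of_compat hc _), heta, p.1.apply_symm_apply]
  rw [← habs]
  have hch : gval p (backF p s hcard) (((p.1.symm v : Fin n) : ℕ) + 1)
      ≤ gval p (backF p s hcard) n :=
    chain_le (fun t ht => (hc t ht).1) (by omega) (le_refl n)
  have hend := gval_backF p s hcard (n - 1) (by omega)
  rw [show n - 1 + 1 = n by omega] at hend
  rw [DD_n] at hend
  have hEb := hsub (s.orderEmbOfFin_mem hcard ⟨n - 1, by omega⟩)
  rw [mem_Icc] at hEb
  have hdes := desB_le p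
  omega

lemma card_chamber (p : BPerm n) (hn : 0 < n) (k : ℕ) :
    ((Fintype.piFinset fun _ : Fin n => Icc (-(k : ℤ)) (k : ℤ)).filter
        (fun f => Compat p f)).card = ((n + k) - desB p).choose n := by
  have hdes := desB_le p
  have hM : (Icc (1 : ℤ) ((n : ℤ) + k - desB p)).card = (n + k) - desB p := by
    rw [Int.card_Icc]
    omega
  rw [← hM, ← card_powersetCard]
  apply card_bij' (fun f _ => image (fun j : Fin n => Tv p f ((j : ℕ) + 1)) univ)
    (fun s hs => backF p s (mem_powersetCard.mp hs).2)
  case hi =>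
    intro f hf
    rw [mem_filter, Fintype.mem_piFinset] at hf
    obtain ⟨hmem, hcomp⟩ := hf
    have hb : ∀ v, |f v| ≤ (k : ℤ) := by
      intro v
      have := hmem v
      rw [mem_Icc] at this
      rw [abs_le]
      exact ⟨this.1, this.2⟩
    rw [mem_powersetCard]
    constructor
    · intro x hx
      rw [mem_image] at hx
      obtain ⟨j, -, rfl⟩ := hx
      rw [mem_Icc]
      exact Tv_bounds hcomp hn hb ((j : ℕ) + 1) (by omega) (by omega)
    · have hsm : StrictMono (fun j : Fin n => Tv p f ((j : ℕ) + 1)) := by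
        apply strictMono_fin_of_adj
        intro i hi
        exact Tv_adj hcomp (i + 1) hi
      rw [card_image_of_injective _ hsm.injective, card_univ, Fintype.card_fin]
  case hj =>
    intro s hs
    have hps := mem_powersetCard.mp hs
    refine mem_filter.mpr ⟨Fintype.mem_piFinset.mpr fun v => ?_,
      compat_backF p hps.2 hps.1⟩
    rw [mem_Icc]
    have := backF_abs_le p hn hps.2 hps.1 v
    rw [abs_le] at this
    exact this
  case left_inv =>
    intro f hf
    rw [mem_filter, Fintype.mem_piFinset] at hf
    obtain ⟨hmem, hcomp⟩ := hf
    have hsm : StrictMono (fun j : Fin n => Tv p f ((j : ℕ) + 1)) := by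
      apply strictMono_fin_of_adj
      intro i hi
      exact Tv_adj hcomp (i + 1) hi
    have key : ∀ (hpf : (image (fun j : Fin n => Tv p f ((j : ℕ) + 1)) univ).card = n),
        backF p (image (fun j : Fin n => Tv p f ((j : ℕ) + 1)) univ) hpf = f := by
      intro hpf
      have hEq : (fun j : Fin n => Tv p f ((j : ℕ) + 1))
          = (image (fun j : Fin n => Tv p f ((j : ℕ) + 1)) univ).orderEmbOfFin hpf :=
        orderEmbOfFin_unique hpf (fun x => mem_image_of_mem _ (mem_univ x)) hsm
      funext v
      rw [backF]
      have hjn : ((p.1.symm v : Fin n) : ℕ) < n := (p.1.symm v).2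
      have hEj : (image (fun j : Fin n => Tv p f ((j : ℕ) + 1)) univ).orderEmbOfFin hpf
          (p.1.symm v) = Tv p f (((p.1.symm v : Fin n) : ℕ) + 1) := by rw [← hEq]
      rw [hEj, Tv]
      have hgv := gval_succ p f ((p.1.symm v : Fin n) : ℕ) hjn
      have heta : (⟨((p.1.symm v : Fin n) : ℕ), hjn⟩ : Fin n) = p.1.symm v := Fin.ext rfl
      rw [heta, p.1.apply_symm_apply] at hgv
      cases hb : p.2 (p.1.symm v) <;>
        simp only [hb, Bool.false_eq_true, if_false, if_true] at hgv ⊢ <;>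
        push_cast <;> omega
    exact key _
  case right_inv =>
    intro s hs
    have hps := mem_powersetCard.mp hs
    have key : ∀ (hpf : s.card = n),
        image (fun j : Fin n => Tv p (backF p s hpf) ((j : ℕ) + 1)) univ = s := by
      intro hpf
      have hTE : (fun j : Fin n => Tv p (backF p s hpf) ((j : ℕ) + 1))
          = fun j : Fin n => s.orderEmbOfFin hpf j := by
        funext j
        rw [Tv, gval_backF p s hpf (j : ℕ) j.2]
        have heta : (⟨(j : ℕ), j.2⟩ : Fin n) = j := Fin.ext rfl
        rw [heta]
        push_cast
        ring
      rw [hTE]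
      apply eq_of_subset_of_card_le
      · intro x hx
        rw [mem_image] at hx
        obtain ⟨j, -, rfl⟩ := hx
        exact s.orderEmbOfFin_mem hpf j
      · rw [card_image_of_injective _ (s.orderEmbOfFin hpf).injective, card_univ,
          Fintype.card_fin, hpf]
    exact key _

end Counting

section Involution

/-- the distinguished coordinate: minimal index among those of maximal absolute value. -/
noncomputable def v0 (hn : 0 < n) (f : Fin n → ℤ) : Fin n :=
  (univ.filter (fun v => ∀ w, |f w| ≤ |f v|)).min' (by
    obtain ⟨v, -, hv⟩ := exists_max_image univ (fun v => |f v|)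
      ⟨⟨0, hn⟩, mem_univ _⟩
    exact ⟨v, mem_filter.mpr ⟨mem_univ _, fun w => hv w (mem_univ _)⟩⟩)

lemma v0_max (hn : 0 < n) (f : Fin n → ℤ) : ∀ w, |f w| ≤ |f (v0 hn f)| := by
  have := (univ.filter (fun v => ∀ w, |f w| ≤ |f v|)).min'_mem (by
    obtain ⟨v, -, hv⟩ := exists_max_image univ (fun v => |f v|)
      ⟨⟨0, hn⟩, mem_univ _⟩
    exact ⟨v, mem_filter.mpr ⟨mem_univ _, fun w => hv w (mem_univ _)⟩⟩)
  exact (mem_filter.mp this).2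

lemma v0_min (hn : 0 < n) (f : Fin n → ℤ) (w : Fin n)
    (hw : |f w| = |f (v0 hn f)|) : v0 hn f ≤ w := by
  apply min'_le
  refine mem_filter.mpr ⟨mem_univ _, fun x => ?_⟩
  rw [hw]
  exact v0_max hn f x

/-- the sign-reversing involution. -/
noncomputable def flipF (hn : 0 < n) (f : Fin n → ℤ) : Fin n → ℤ :=
  Function.update f (v0 hn f) (-(f (v0 hn f)))

lemma flipF_abs (hn : 0 < n) (f : Fin n → ℤ) (w : Fin n) :
    |flipF hn f w| = |f w| := by
  rw [flipF, Function.update_apply]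
  split
  · subst ‹w = v0 hn f›; rw [abs_neg]
  · rfl

lemma v0_flipF (hn : 0 < n) (f : Fin n → ℤ) : v0 hn (flipF hn f) = v0 hn f := by
  have hset : (univ.filter fun v => ∀ w, |flipF hn f w| ≤ |flipF hn f v|)
      = (univ.filter fun v => ∀ w, |f w| ≤ |f v|) := by
    apply filter_congr
    intro v _
    simp only [flipF_abs]
  simp only [v0, hset]

lemma flipF_flipF (hn : 0 < n) (f : Fin n → ℤ) : flipF hn (flipF hn f) = f := by
  funext w
  rw [flipF, v0_flipF]
  rw [Function.update_apply]
  split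
  · subst ‹w = v0 hn f›
    rw [flipF, Function.update_self, neg_neg]
  · rw [flipF, Function.update_of_ne ‹¬ w = v0 hn f›]

lemma skey_update_lt {f : Fin n → ℤ} {v₀ : Fin n} (hmax : ∀ w, |f w| ≤ |f v₀|)
    (hmin : ∀ w, |f w| = |f v₀| → v₀ ≤ w) (hf0 : f v₀ ≠ 0) (x y : Fin n)
    (h : skey f x < skey f y) :
    skey (Function.update f v₀ (-(f v₀))) x < skey (Function.update f v₀ (-(f v₀))) y := by
  set f' := Function.update f v₀ (-(f v₀)) with hf'
  have habs : ∀ w, |f' w| = |f w| := by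
    intro w
    rw [hf', Function.update_apply]
    split
    · subst ‹w = v₀›; rw [abs_neg]
    · rfl
  rw [skey_lt_iff] at h ⊢
  rcases h with habs' | ⟨heq, hsv⟩
  · exact Or.inl (by rw [habs, habs]; exact habs')
  · refine Or.inr ⟨by rw [habs, habs]; exact heq, ?_⟩
    by_cases hx : x = v₀
    · subst hx
      by_cases hy : y = x
      · subst hy; exact absurd hsv (lt_irrefl _)
      · have hvy : x < y := lt_of_le_of_ne (hmin y (by omega)) (Ne.symm hy)
        have hvy' : (x : ℕ) < (y : ℕ) := hvy
        have hfy : f' y = f y := Function.update_of_ne hy _ _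
        have hf'x : f' x = -(f x) := Function.update_self _ _ _
        have hsvy : sval f' y = sval f y := by rw [sval, sval, hfy]
        rw [hsvy]
        rcases lt_or_gt_of_ne hf0 with hneg | hpos
        · -- f v₀ < 0 : new sval is positive, old f y must be nonneg
          have h1 : sval f x = -((x : ℤ) + 1) := by rw [sval, if_pos hneg]
          have h2 : ¬ f y < 0 := by
            intro hy'
            rw [h1, sval, if_pos hy'] at hsv
            have : (y : ℕ) < (x : ℕ) := by omega
            omega
          have h3 : sval f y = (y : ℤ) + 1 := by rw [sval, if_neg h2]
          have h4 : sval f' x = (x : ℤ) + 1 := by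
            rw [sval, hf'x, if_neg (by omega)]
          rw [h3, h4]
          omega
        · -- f v₀ > 0 : new sval is negative
          have h4 : sval f' x = -((x : ℤ) + 1) := by
            rw [sval, hf'x, if_pos (by omega)]
          have h1 : sval f x = (x : ℤ) + 1 := by rw [sval, if_neg (by omega)]
          have h2 : ¬ f y < 0 := by
            intro hy'
            rw [h1, sval, if_pos hy'] at hsv
            omega
          have h3 : sval f y = (y : ℤ) + 1 := by rw [sval, if_neg h2]
          rw [h3, h4]
          omega
    · by_cases hy : y = v₀
      · subst hy
        have hvx : y < x := lt_of_le_of_ne (hmin x heq) (Ne.symm hx)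
        have hvx' : (y : ℕ) < (x : ℕ) := hvx
        have hfx : f' x = f x := Function.update_of_ne hx _ _
        have hf'y : f' y = -(f y) := Function.update_self _ _ _
        have hsvx : sval f' x = sval f x := by rw [sval, sval, hfx]
        rw [hsvx]
        rcases lt_or_gt_of_ne hf0 with hneg | hpos
        · have h1 : sval f y = -((y : ℤ) + 1) := by rw [sval, if_pos hneg]
          have h2 : f x < 0 := by
            by_contra hx'
            rw [h1, sval, if_neg hx'] at hsv
            omega
          have h3 : sval f x = -((x : ℤ) + 1) := by rw [sval, if_pos h2]
          have h4 : sval f' y = (y : ℤ) + 1 := by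
            rw [sval, hf'y, if_neg (by omega)]
          rw [h3, h4]
          omega
        · have h1 : sval f y = (y : ℤ) + 1 := by rw [sval, if_neg (by omega)]
          have h2 : f x < 0 := by
            by_contra hx'
            rw [h1, sval, if_neg hx'] at hsv
            omega
          have h3 : sval f x = -((x : ℤ) + 1) := by rw [sval, if_pos h2]
          have h4 : sval f' y = -((y : ℤ) + 1) := by
            rw [sval, hf'y, if_pos (by omega)]
          rw [h3, h4]
          omega
      · have hfx : f' x = f x := Function.update_of_ne hx _ _
        have hfy : f' y = f y := Function.update_of_ne hy _ _
        have : sval f' x = sval f x := by rw [sval, sval, hfx]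
        have : sval f' y = sval f y := by rw [sval, sval, hfy]
        rw [‹sval f' x = sval f x›, ‹sval f' y = sval f y›]
        exact hsv

lemma sgn_pow_update (ε : Fin n → Bool) (j₀ : Fin n) :
    ((-1 : ℤ) ^ (univ.filter (fun i => Function.update ε j₀ (!ε j₀) i = true)).card)
      = -((-1 : ℤ) ^ (univ.filter (fun i => ε i = true)).card) := by
  by_cases h : ε j₀ = true
  case neg =>
    have h : ε j₀ = false := by simpa using h
    have hset : univ.filter (fun i => Function.update ε j₀ (!ε j₀) i = true)
        = insert j₀ (univ.filter (fun i => ε i = true)) := by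
      ext i
      simp only [mem_filter, mem_insert, mem_univ, true_and, Function.update_apply]
      by_cases hij : i = j₀
      · subst hij; simp [h]
      · simp [hij]
    rw [hset, card_insert_of_notMem (by simp [h]), pow_succ]
    ring
  case pos =>
    have hmem : j₀ ∈ univ.filter (fun i => ε i = true) := mem_filter.mpr ⟨mem_univ _, h⟩
    have hset : univ.filter (fun i => Function.update ε j₀ (!ε j₀) i = true)
        = (univ.filter (fun i => ε i = true)).erase j₀ := by
      ext i
      simp only [mem_erase, mem_filter, mem_univ, true_and, Function.update_apply]
      by_cases hij : i = j₀
      · subst hij; simp [h]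
      · simp [hij]
    rw [hset, card_erase_of_mem hmem]
    have hc : 0 < (univ.filter (fun i => ε i = true)).card := card_pos.mpr ⟨j₀, hmem⟩
    obtain ⟨c', hc'⟩ : ∃ c', (univ.filter (fun i => ε i = true)).card = c' + 1 :=
      ⟨(univ.filter (fun i => ε i = true)).card - 1, by omega⟩
    rw [hc', Nat.add_sub_cancel, pow_succ]
    ring

lemma sgnB_chamber_flipF (hn : 0 < n) (f : Fin n → ℤ) (hf0 : f (v0 hn f) ≠ 0) :
    sgnB (chamber (flipF hn f)) = -(sgnB (chamber f)) := by
  set p := chamber f with hp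
  set v₀ := v0 hn f with hv₀
  set f' := flipF hn f with hf'
  have hRp : R p f := R_chamber f
  set j₀ := p.1.symm v₀ with hj₀
  set q : BPerm n := (p.1, Function.update p.2 j₀ (!(p.2 j₀))) with hqdef
  have happ : p.1 j₀ = v₀ := p.1.apply_symm_apply v₀
  have hfv : f' v₀ = -(f v₀) := Function.update_self _ _ _
  have hq2 : ∀ j : Fin n, q.2 j = true ↔ f' (p.1 j) < 0 := by
    intro j
    by_cases hj : j = j₀
    · subst hj
      have hiff := hRp.1 j₀
      rw [happ] at hiff
      show Function.update p.2 j₀ (!(p.2 j₀)) j₀ = true ↔ _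
      rw [Function.update_self, happ, hfv]
      cases hb : p.2 j₀
      · rw [hb] at hiff
        have hpos : ¬ f v₀ < 0 := fun hx => by simpa using hiff.mpr hx
        simp only [Bool.not_false, true_iff]
        omega
      · rw [hb] at hiff
        have hneg : f v₀ < 0 := hiff.mp rfl
        simp only [Bool.not_true, Bool.false_eq_true, false_iff]
        omega
    · have h1 : p.1 j ≠ v₀ := fun hx => hj (by rw [hj₀, ← hx, p.1.symm_apply_apply])
      have h2 : f' (p.1 j) = f (p.1 j) := Function.update_of_ne h1 _ _
      show Function.update p.2 j₀ (!(p.2 j₀)) j = true ↔ _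
      rw [Function.update_of_ne hj, h2]
      exact hRp.1 j
  have hqR : R q f' := by
    refine ⟨hq2, ?_⟩
    intro a b hab
    exact skey_update_lt (v0_max hn f) (v0_min hn f) hf0 _ _ (hRp.2 hab)
  have hcf : chamber f' = q := R_unique (R_chamber f') hqR
  rw [hcf, sgnB, sgnB]
  show (Equiv.Perm.sign p.1 : ℤ) * _ = -((Equiv.Perm.sign p.1 : ℤ) * _)
  rw [sgn_pow_update]
  ring

end Involution

section Assembly

/-- the box of functions with `|f| ≤ k`. -/
noncomputable def Fk (n k : ℕ) : Finset (Fin n → ℤ) :=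
  Fintype.piFinset fun _ : Fin n => Icc (-(k : ℤ)) (k : ℤ)

lemma card_Fk (k : ℕ) : (Fk n k).card = (2 * k + 1) ^ n := by
  rw [Fk, Fintype.card_piFinset]
  have hc : (Icc (-(k : ℤ)) (k : ℤ)).card = 2 * k + 1 := by
    rw [Int.card_Icc]
    omega
  simp [hc]

lemma sum_choose_all (hn : 0 < n) (k : ℕ) :
    ∑ p : BPerm n, ((n + k) - desB p).choose n = (2 * k + 1) ^ n := by
  rw [← card_Fk (n := n) k,
    card_eq_sum_card_fiberwise (f := fun f => chamber f) (t := univ) (fun f _ => mem_univ _)]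
  apply sum_congr rfl
  intro p _
  rw [← card_chamber p hn k]
  congr 1
  exact filter_congr (fun f _ => chamber_eq_iff.symm)

lemma v0_ne_zero_of_ne (hn : 0 < n) {f : Fin n → ℤ} (hf : f ≠ fun _ => (0 : ℤ)) :
    f (v0 hn f) ≠ 0 := by
  intro hzero
  apply hf
  funext w
  have hw := v0_max hn f w
  rw [hzero, abs_zero] at hw
  exact abs_eq_zero.mp (le_antisymm hw (abs_nonneg _))

lemma sgnB_chamber_zero (hn : 0 < n) : sgnB (chamber (fun _ : Fin n => (0 : ℤ))) = 1 := by
  have hR0 : R ((1 : Equiv.Perm (Fin n)), fun _ => false) (fun _ : Fin n => (0 : ℤ)) := by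
    constructor
    · intro j
      simp
    · show StrictMono fun j : Fin n => skey (fun _ : Fin n => (0 : ℤ)) j
      intro a b hab
      rw [skey_lt_iff]
      refine Or.inr ⟨rfl, ?_⟩
      rw [sval, sval, if_neg (lt_irrefl 0), if_neg (lt_irrefl 0)]
      have hab' : (a : ℕ) < (b : ℕ) := hab
      omega
  rw [R_unique (R_chamber _) hR0, sgnB]
  simp

lemma sum_sgn_chamber (hn : 0 < n) (k : ℕ) :
    ∑ f ∈ Fk n k, sgnB (chamber f) = 1 := by
  have h0 : (fun _ : Fin n => (0 : ℤ)) ∈ Fk n k := by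
    rw [Fk, Fintype.mem_piFinset]
    intro v
    rw [mem_Icc]
    omega
  rw [← Finset.add_sum_erase _ _ h0, sgnB_chamber_zero hn]
  have herase : ∑ f ∈ (Fk n k).erase (fun _ => (0 : ℤ)), sgnB (chamber f) = 0 := by
    apply sum_involution (fun f _ => flipF hn f)
    · intro f hf
      have hf0 := v0_ne_zero_of_ne hn (mem_erase.mp hf).1
      rw [sgnB_chamber_flipF hn f hf0]
      ring
    · intro f hf _
      have hf0 := v0_ne_zero_of_ne hn (mem_erase.mp hf).1
      intro hEq
      have := congrFun hEq (v0 hn f)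
      rw [flipF, Function.update_self] at this
      omega
    · intro f hf
      rw [mem_erase]
      have hf0 := v0_ne_zero_of_ne hn (mem_erase.mp hf).1
      constructor
      · intro hEq
        have := congrFun hEq (v0 hn f)
        rw [flipF, Function.update_self] at this
        exact hf0 (by omega)
      · rw [Fk, Fintype.mem_piFinset]
        intro v
        rw [mem_Icc]
        have hmem := (Fintype.mem_piFinset.mp (mem_of_mem_erase hf)) v
        rw [mem_Icc] at hmem
        have h1 : |f v| ≤ (k : ℤ) := abs_le.mpr hmem
        have h2 : |flipF hn f v| ≤ (k : ℤ) := by rw [flipF_abs hn f v]; exact h1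
        exact abs_le.mp h2
    · intro f hf
      exact flipF_flipF hn f
  rw [herase]
  norm_num

lemma sum_sgn_choose (hn : 0 < n) (k : ℕ) :
    ∑ p : BPerm n, sgnB p * (((n + k) - desB p).choose n : ℤ) = 1 := by
  rw [← sum_sgn_chamber hn k,
    ← sum_fiberwise_of_maps_to (g := fun f => chamber f) (t := univ)
      (fun f _ => mem_univ _) (fun f => sgnB (chamber f))]
  apply sum_congr rfl
  intro p _
  have hcongr : ∀ f ∈ (Fk n k).filter (fun f => chamber f = p),
      sgnB (chamber f) = sgnB p := by
    intro f hf
    rw [(mem_filter.mp hf).2]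
  rw [sum_congr rfl hcongr, sum_const, nsmul_eq_mul,
    filter_congr (fun f _ => chamber_eq_iff), Fk, card_chamber p hn k]
  ring

lemma sgnB_eq_one_or (p : BPerm n) : sgnB p = 1 ∨ sgnB p = -1 := by
  rw [sgnB]
  rcases Int.units_eq_one_or (Equiv.Perm.sign p.1) with h | h <;> rw [h] <;>
    rcases Nat.even_or_odd ((univ.filter (fun i => p.2 i = true)).card) with he | he <;>
    simp [he.neg_one_pow]

lemma sum_pos_choose (hn : 0 < n) (k : ℕ) :
    ∑ p ∈ univ.filter (fun p : BPerm n => sgnB p = 1),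
      (((n + k) - desB p).choose n : ℚ) = ((2 * (k : ℚ) + 1) ^ n + 1) / 2 := by
  have hA : ∑ p : BPerm n, (((n + k) - desB p).choose n : ℚ) = (2 * (k : ℚ) + 1) ^ n := by
    have := sum_choose_all hn k
    have hcast := congrArg (fun m : ℕ => (m : ℚ)) this
    push_cast at hcast
    exact hcast
  have hB : ∑ p : BPerm n, (sgnB p : ℚ) * (((n + k) - desB p).choose n : ℚ) = 1 := by
    have := sum_sgn_choose hn k
    have hcast := congrArg (fun m : ℤ => (m : ℚ)) this
    push_cast at hcast
    exact hcast
  have hsplit : ∑ p : BPerm n, ((1 : ℚ) + sgnB p) * (((n + k) - desB p).choose n : ℚ)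
      = ∑ p : BPerm n, (if sgnB p = 1 then 2 * (((n + k) - desB p).choose n : ℚ) else 0) := by
    apply sum_congr rfl
    intro p _
    rcases sgnB_eq_one_or p with h | h <;> rw [h]
    · rw [if_pos rfl]
      push_cast
      ring
    · rw [if_neg (by decide)]
      push_cast
      ring
  have hlhs : ∑ p : BPerm n, ((1 : ℚ) + sgnB p) * (((n + k) - desB p).choose n : ℚ)
      = (2 * (k : ℚ) + 1) ^ n + 1 := by
    rw [show (fun p : BPerm n => ((1 : ℚ) + sgnB p) * (((n + k) - desB p).choose n : ℚ))
      = fun p => (((n + k) - desB p).choose n : ℚ)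
        + (sgnB p : ℚ) * (((n + k) - desB p).choose n : ℚ) from funext fun p => by ring]
    rw [sum_add_distrib, hA, hB]
  have hrhs : ∑ p : BPerm n, (if sgnB p = 1 then 2 * (((n + k) - desB p).choose n : ℚ) else 0)
      = 2 * ∑ p ∈ univ.filter (fun p : BPerm n => sgnB p = 1),
          (((n + k) - desB p).choose n : ℚ) := by
    rw [mul_sum, sum_filter]
  rw [hsplit, hrhs] at hlhs
  linarith

end Assembly

end TypeBAux

theorem typeB_positive_eulerian_series (n : ℕ) (hn : 1 ≤ n) :
    ∑ p ∈ Finset.univ.filter (fun p : BPerm n => sgnB p = 1),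
        (PowerSeries.X : PowerSeries ℚ) ^ (desB p)
      = (1 - PowerSeries.X) ^ (n + 1) *
          PowerSeries.mk (fun k => ((2 * (k : ℚ) + 1) ^ n + 1) / 2) := by
  classical
  set P : PowerSeries ℚ := ∑ p ∈ Finset.univ.filter (fun p : BPerm n => sgnB p = 1),
    (PowerSeries.X : PowerSeries ℚ) ^ (desB p) with hP
  have hkey : P * PowerSeries.mk (fun b => ((n + b).choose n : ℚ))
      = PowerSeries.mk (fun k => ((2 * (k : ℚ) + 1) ^ n + 1) / 2) := by
    ext k
    rw [PowerSeries.coeff_mk, hP, Finset.sum_mul, map_sum]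
    have hterm : ∀ p ∈ Finset.univ.filter (fun p : BPerm n => sgnB p = 1),
        (PowerSeries.coeff k) ((PowerSeries.X : PowerSeries ℚ) ^ desB p
            * PowerSeries.mk (fun b => ((n + b).choose n : ℚ)))
          = (((n + k) - desB p).choose n : ℚ) := by
      intro p _
      rw [PowerSeries.coeff_X_pow_mul']
      split
      · rw [PowerSeries.coeff_mk]
        norm_cast
        congr 1
        omega
      · rw [eq_comm]
        norm_cast
        exact Nat.choose_eq_zero_of_lt (by omega)
    rw [Finset.sum_congr rfl hterm]
    exact TypeBAux.sum_pos_choose (by omega) k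
  have hinv : PowerSeries.mk (fun b => ((n + b).choose n : ℚ))
      * (1 - PowerSeries.X) ^ (n + 1) = 1 :=
    PowerSeries.mk_add_choose_mul_one_sub_pow_eq_one ℚ n
  calc P = P * (PowerSeries.mk (fun b => ((n + b).choose n : ℚ))
        * (1 - PowerSeries.X) ^ (n + 1)) := by rw [hinv, mul_one]
    _ = (P * PowerSeries.mk (fun b => ((n + b).choose n : ℚ)))
        * (1 - PowerSeries.X) ^ (n + 1) := by ring
    _ = PowerSeries.mk (fun k => ((2 * (k : ℚ) + 1) ^ n + 1) / 2)
        * (1 - PowerSeries.X) ^ (n + 1) := by rw [hkey]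
    _ = (1 - PowerSeries.X) ^ (n + 1)
        * PowerSeries.mk (fun k => ((2 * (k : ℚ) + 1) ^ n + 1) / 2) := mul_comm _ _
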